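/- Let d be a pseudo-metric on N ∪ C with |N| = n, let c*, c' ∈ C with D = d(c*, c') > 0, and let L = {i ∈ N : d(i, c') < D/12}. Then SC(c*) ≤ 13·SC(c') + |L|·D and SC(c') ≥ (n − |L|)·D/12; consequently SC(c*) ≤ (13 + 12·|L|/(n − |L|))·SC(c') whenever |L| < n. -/

import Mathlib

/-- With `D = d(c*,c') > 0` and `L = {i ∈ N : d(i,c') < D/12}`:
`SC(c*) ≤ 13·SC(c') + |L|·D`, `SC(c') ≥ (n − |L|)·D/12`, and if `|L| < n` then
`SC(c*) ≤ (13 + 12·|L|/(n − |L|))·SC(c')`. -/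
theorem stmt_12 {V : Type*} [DecidableEq V] (d : V → V → ℝ)
    (hsymm : ∀ x y, d x y = d y x)
    (htri : ∀ x y z, d x z ≤ d x y + d y z)
    (hnonneg : ∀ x y, 0 ≤ d x y)
    (N : Finset V) (n : ℕ) (hn : N.card = n)
    (cstar c' : V) (D : ℝ) (hD : D = d cstar c') (hDpos : 0 < D)
    (L : Finset V) (hL : L = N.filter (fun i => d i c' < D / 12)) :
    (∑ i ∈ N, d i cstar ≤ 13 * (∑ i ∈ N, d i c') + (L.card : ℝ) * D) ∧
    (∑ i ∈ N, d i c' ≥ ((n : ℝ) - L.card) * D / 12) ∧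
    (L.card < n →
      ∑ i ∈ N, d i cstar ≤
        (13 + 12 * (L.card : ℝ) / ((n : ℝ) - L.card)) * ∑ i ∈ N, d i c') := by
  subst hn hL
  set P : V → Prop := fun i => d i c' < D / 12 with hP
  have h1 : ∑ i ∈ N, d i cstar ≤ 13 * (∑ i ∈ N, d i c') +
      ((N.filter P).card : ℝ) * D := by
    have hpt : ∀ i ∈ N, d i cstar ≤ 13 * d i c' + (if P i then D else 0) := by
      intro i _
      have h := htri i c' cstar
      have hcc : d c' cstar = D := by rw [hsymm]; exact hD.symm
      have hnn := hnonneg i c'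
      by_cases hp : P i
      · simp only [hp, if_pos]; linarith
      · simp only [hp, if_neg, not_false_iff]
        have : D / 12 ≤ d i c' := not_lt.mp hp
        linarith
    calc ∑ i ∈ N, d i cstar ≤ ∑ i ∈ N, (13 * d i c' + (if P i then D else 0)) :=
          Finset.sum_le_sum hpt
      _ = 13 * (∑ i ∈ N, d i c') + ((N.filter P).card : ℝ) * D := by
          rw [Finset.sum_add_distrib, Finset.mul_sum]
          congr 1
          rw [← Finset.sum_filter, Finset.sum_const, nsmul_eq_mul]
  have hcards : (N.filter P).card + (N.filter (fun i => ¬ P i)).card = N.card :=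
    Finset.card_filter_add_card_filter_not (fun i => P i)
  have h2 : ∑ i ∈ N, d i c' ≥ ((N.card : ℝ) - (N.filter P).card) * D / 12 := by
    have hsub : ∑ i ∈ N.filter (fun i => ¬ P i), d i c' ≤ ∑ i ∈ N, d i c' :=
      Finset.sum_le_sum_of_subset_of_nonneg (Finset.filter_subset _ _)
        (fun i _ _ => hnonneg i c')
    have hlow : ((N.filter (fun i => ¬ P i)).card : ℝ) * (D / 12) ≤
        ∑ i ∈ N.filter (fun i => ¬ P i), d i c' := by
      have := Finset.card_nsmul_le_sum (N.filter (fun i => ¬ P i))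
        (fun i => d i c') (D / 12) (by
          intro i hi
          simp only [Finset.mem_filter] at hi
          exact not_lt.mp hi.2)
      simpa [nsmul_eq_mul] using this
    have hc : ((N.filter (fun i => ¬ P i)).card : ℝ) =
        (N.card : ℝ) - (N.filter P).card := by
      have := congrArg (fun k : ℕ => (k : ℝ)) hcards
      push_cast at this
      linarith
    rw [hc] at hlow
    linarith
  refine ⟨h1, h2, fun hlt => ?_⟩
  set k : ℝ := ((N.filter P).card : ℝ)
  have hk : (N.card : ℝ) - k > 0 := by
    have : ((N.filter P).card : ℝ) < (N.card : ℝ) := by exact_mod_cast hlt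
    simp only [k]; linarith
  have hknn : 0 ≤ k := Nat.cast_nonneg _
  have hS : 0 ≤ ∑ i ∈ N, d i c' := Finset.sum_nonneg (fun i _ => hnonneg i c')
  have hDle : D ≤ 12 * (∑ i ∈ N, d i c') / ((N.card : ℝ) - k) := by
    rw [le_div_iff₀ hk]
    nlinarith [h2]
  calc ∑ i ∈ N, d i cstar ≤ 13 * (∑ i ∈ N, d i c') + k * D := h1
    _ ≤ 13 * (∑ i ∈ N, d i c') + k * (12 * (∑ i ∈ N, d i c') / ((N.card : ℝ) - k)) := by
        have := mul_le_mul_of_nonneg_left hDle hknn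
        linarith
    _ = (13 + 12 * k / ((N.card : ℝ) - k)) * ∑ i ∈ N, d i c' := by
        field_simp
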